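/- There exists a unit upper triangular matrix C ∈ ℝ^{m×m} such that A_S = C A, where A_S is the matrix whose i-th row is (Q_i a_i)^T. -/

import Mathlib

open Matrix Filter

noncomputable def projMat {n : ℕ} (a : Fin n → ℝ) : Matrix (Fin n) (Fin n) ℝ :=
  1 - (a ⬝ᵥ a)⁻¹ • Matrix.vecMulVec a a

noncomputable def vnorm {n : ℕ} (x : Fin n → ℝ) : ℝ := Real.sqrt (x ⬝ᵥ x)

/-- `x ∈ N(A)^⊥`: `x` is orthogonal to every vector of the null space of `A`. -/
def inNullPerp {m n : ℕ} (A : Matrix (Fin m) (Fin n) ℝ) (x : Fin n → ℝ) : Prop :=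
  ∀ z : Fin n → ℝ, A.mulVec z = 0 → x ⬝ᵥ z = 0

/-- `P_k` (0-indexed): the projection onto the hyperplane orthogonal to row `k` of `A`. -/
noncomputable def Pnat {m n : ℕ} (A : Matrix (Fin m) (Fin n) ℝ) (k : ℕ) :
    Matrix (Fin n) (Fin n) ℝ :=
  if h : k < m then projMat (A ⟨k, h⟩) else 1

/-- descending product `f (lo+len-1) * ⋯ * f (lo+1) * f lo` -/
noncomputable def prodDesc {α : Type*} [Monoid α] (f : ℕ → α) (lo : ℕ) : ℕ → α
  | 0 => 1
  | k + 1 => f (lo + k) * prodDesc f lo k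

/-- ascending product `f lo * f (lo+1) * ⋯ * f (lo+len-1)` -/
noncomputable def prodAsc {α : Type*} [Monoid α] (f : ℕ → α) (lo : ℕ) : ℕ → α
  | 0 => 1
  | k + 1 => prodAsc f lo k * f (lo + k)

/-- `Q_j = P_m ⋯ P_{j+1}` (paper indices); here `j : Fin m` is 0-indexed. -/
noncomputable def Qmat {m n : ℕ} (A : Matrix (Fin m) (Fin n) ℝ) (j : Fin m) :
    Matrix (Fin n) (Fin n) ℝ :=
  prodDesc (Pnat A) ((j : ℕ) + 1) (m - 1 - (j : ℕ))

/-- `Q = P_m P_{m-1} ⋯ P_1`. -/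
noncomputable def Qfull {m n : ℕ} (A : Matrix (Fin m) (Fin n) ℝ) : Matrix (Fin n) (Fin n) ℝ :=
  prodDesc (Pnat A) 0 m

/-- `A_S = (Q_1 a_1, …, Q_m a_m)ᵀ`. -/
noncomputable def ASmat {m n : ℕ} (A : Matrix (Fin m) (Fin n) ℝ) : Matrix (Fin m) (Fin n) ℝ :=
  fun i => (Qmat A i).mulVec (A i)

/-- `M = diag (1/‖a_1‖², …, 1/‖a_m‖²)`. -/
noncomputable def Mdiag {m n : ℕ} (A : Matrix (Fin m) (Fin n) ℝ) : Matrix (Fin m) (Fin m) ℝ :=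
  Matrix.diagonal fun i => (A i ⬝ᵥ A i)⁻¹

/-- `Q̄_1 = Q̄_m = 0`, `Q̄_2 = I`, `Q̄_i = P_2 ⋯ P_{i-1}` (paper indices); `i : Fin m` 0-indexed. -/
noncomputable def barQmat {m n : ℕ} (A : Matrix (Fin m) (Fin n) ℝ) (i : Fin m) :
    Matrix (Fin n) (Fin n) ℝ :=
  if (i : ℕ) = 0 ∨ (i : ℕ) = m - 1 then 0 else prodAsc (Pnat A) 1 ((i : ℕ) - 1)

/-- `Q̄ = P_2 P_3 ⋯ P_{m-1}`. -/
noncomputable def barQfull {m n : ℕ} (A : Matrix (Fin m) (Fin n) ℝ) : Matrix (Fin n) (Fin n) ℝ :=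
  prodAsc (Pnat A) 1 (m - 2)

/-- `Ā_S = (Q̄_1 a_1, …, Q̄_m a_m)ᵀ`. -/
noncomputable def barASmat {m n : ℕ} (A : Matrix (Fin m) (Fin n) ℝ) : Matrix (Fin m) (Fin n) ℝ :=
  fun i => (barQmat A i).mulVec (A i)

/-- `h_{p,q} = a_pᵀ a_q / ‖a_q‖²`. -/
noncomputable def hcoef {m n : ℕ} (A : Matrix (Fin m) (Fin n) ℝ) (p q : Fin m) : ℝ :=
  (A p ⬝ᵥ A q) / (A q ⬝ᵥ A q)


lemma key_lemma {m n : ℕ} (A : Matrix (Fin m) (Fin n) ℝ) (lo len : ℕ) (v : Fin n → ℝ) :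
    ∃ d : Fin m → ℝ, (∀ k : Fin m, d k ≠ 0 → lo ≤ (k : ℕ)) ∧
      (prodDesc (Pnat A) lo len).mulVec v = v + A.vecMul d := by
  induction len with
  | zero =>
    refine ⟨0, by simp, ?_⟩
    simp [prodDesc]
  | succ k ih =>
    obtain ⟨d, hd, heq⟩ := ih
    rw [prodDesc, ← Matrix.mulVec_mulVec, heq]
    set w := v + A.vecMul d with hw
    by_cases h : lo + k < m
    · refine ⟨d + Pi.single ⟨lo + k, h⟩ (-((A ⟨lo+k,h⟩ ⬝ᵥ A ⟨lo+k,h⟩)⁻¹ * (A ⟨lo+k,h⟩ ⬝ᵥ w))), ?_, ?_⟩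
      · intro j hj
        by_cases hjk : j = (⟨lo + k, h⟩ : Fin m)
        · subst hjk; simp
        · have : d j ≠ 0 := by
            simpa [Pi.single_apply, hjk] using hj
          exact hd j this
      · rw [Pnat, dif_pos h, projMat]
        rw [Matrix.sub_mulVec, Matrix.one_mulVec, Matrix.smul_mulVec]
        have hvm : (Matrix.vecMulVec (A ⟨lo+k,h⟩) (A ⟨lo+k,h⟩)).mulVec w
            = (A ⟨lo+k,h⟩ ⬝ᵥ w) • A ⟨lo+k,h⟩ := by
          ext j
          simp [Matrix.mulVec, Matrix.vecMulVec_apply, dotProduct, Finset.mul_sum,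
            mul_comm, mul_assoc, mul_left_comm]
        rw [hvm, Matrix.add_vecMul]
        have hsingle : A.vecMul (Pi.single (⟨lo+k,h⟩ : Fin m)
            (-((A ⟨lo+k,h⟩ ⬝ᵥ A ⟨lo+k,h⟩)⁻¹ * (A ⟨lo+k,h⟩ ⬝ᵥ w))))
            = (-((A ⟨lo+k,h⟩ ⬝ᵥ A ⟨lo+k,h⟩)⁻¹ * (A ⟨lo+k,h⟩ ⬝ᵥ w))) • A ⟨lo+k,h⟩ := by
          ext j
          simp [Matrix.vecMul, dotProduct, Pi.single_apply]
        rw [hsingle, hw]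
        ext j
        simp [smul_smul]
        ring
    · refine ⟨d, hd, ?_⟩
      rw [Pnat, dif_neg h, Matrix.one_mulVec]



/-- there is a unit upper triangular `C` with `A_S = C A`. -/
theorem stmt5 {m n : ℕ} (A : Matrix (Fin m) (Fin n) ℝ) (hA : ∀ i, A i ≠ 0) :
    ∃ C : Matrix (Fin m) (Fin m) ℝ,
      (∀ i : Fin m, C i i = 1) ∧ (∀ i j : Fin m, j < i → C i j = 0) ∧ ASmat A = C * A := by
  have key := fun i : Fin m => key_lemma A ((i : ℕ) + 1) (m - 1 - (i : ℕ)) (A i)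
  choose d hd heq using key
  refine ⟨fun i j => (if j = i then 1 else 0) + d i j, ?_, ?_, ?_⟩
  · intro i
    have : d i i = 0 := by
      by_contra hne
      have := hd i i hne
      omega
    simp [this]
  · intro i j hji
    have : d i j = 0 := by
      by_contra hne
      have := hd i j hne
      have : (j : ℕ) < (i : ℕ) := hji
      omega
    simp [this, Fin.ne_of_lt hji]
  · ext i j
    have h1 : ASmat A i = A i + A.vecMul (d i) := heq i
    have : ASmat A i j = A i j + A.vecMul (d i) j := by rw [h1]; rfl
    rw [this]
    erw [Matrix.mul_apply]
    simp [Matrix.mul_apply, Matrix.vecMul, dotProduct, add_mul, Finset.sum_add_distrib,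
      ite_mul, Finset.sum_ite_eq]
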